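/- Let K be a field with an additive real-valued valuation v, let K̄ be an algebraic closure of K, and let w be an additive real-valued valuation on K̄ extending v (i.e., w restricted to the image of K equals v). Let P = Σ_{i=0}^d a_i X^i ∈ K[X] with d ≥ 1 and a_d ≠ 0, and define its complete valuation polygon NP(P) : ℝ → ℝ by NP(P)(t) = min{ v(a_i) + i·t : 0 ≤ i ≤ d, a_i ≠ 0 }. Suppose there are r ∈ ℝ, ε > 0 and real constants s₋, s₊, β₋, β₊ with s₋ > s₊, such that NP(P)(t) = s₋·t + β₋ for all t ∈ [r − ε, r] and NP(P)(t) = s₊·t + β₊ for all t ∈ [r, r + ε]. Then the number of roots α of P in K̄, counted with multiplicity, satisfying w(α) = r equals s₋ − s₊. -/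

import Mathlib

open scoped Classical

namespace S7

variable {L : Type*} [Field L]

lemma coe_nsmul_real (n : ℕ) (t : ℝ) : (n : ℕ) • (t : WithTop ℝ) = ((n * t : ℝ) : WithTop ℝ) := by
  induction n with
  | zero => simp
  | succ k ih =>
    rw [succ_nsmul, ih, ← WithTop.coe_add, WithTop.coe_inj]
    push_cast
    ring

lemma sum_ne_top {M : Multiset (WithTop ℝ)} (h : ∀ x ∈ M, x ≠ ⊤) : M.sum ≠ ⊤ := by
  induction M using Multiset.induction_on with
  | empty => simp
  | cons a M ih =>
    rw [Multiset.sum_cons, WithTop.add_ne_top]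
    exact ⟨h a (Multiset.mem_cons_self a M), ih fun x hx => h x (Multiset.mem_cons_of_mem hx)⟩

lemma add_lt_add' {a b c d : WithTop ℝ} (h1 : a < b) (h2 : c ≤ d) (hc : c ≠ ⊤) :
    a + c < b + d := by
  calc a + c < b + c := WithTop.add_lt_add_right hc h1
  _ ≤ b + d := add_le_add_right h2 b

section W

variable (w : L → WithTop ℝ)

lemma w_one (hw0 : ∀ x : L, w x = ⊤ ↔ x = 0)
    (hwmul : ∀ x y : L, w (x * y) = w x + w y) : w 1 = 0 := by
  have h1 : w 1 ≠ ⊤ := by simp [hw0]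
  obtain ⟨u, hu⟩ := WithTop.ne_top_iff_exists.mp h1
  have h := hwmul 1 1
  rw [one_mul, ← hu, ← WithTop.coe_add] at h
  have : u = u + u := WithTop.coe_injective h
  have : u = 0 := by linarith
  rw [← hu, this, WithTop.coe_zero]

lemma w_neg (hw0 : ∀ x : L, w x = ⊤ ↔ x = 0)
    (hwmul : ∀ x y : L, w (x * y) = w x + w y) (x : L) : w (-x) = w x := by
  have hn1 : w (-1 : L) = 0 := by
    have h1 : w (-1 : L) ≠ ⊤ := by simp [hw0]
    obtain ⟨u, hu⟩ := WithTop.ne_top_iff_exists.mp h1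
    have h := hwmul (-1) (-1)
    rw [neg_mul_neg, one_mul, w_one w hw0 hwmul, ← hu, ← WithTop.coe_add] at h
    have : (0 : ℝ) = u + u := WithTop.coe_injective (by exact_mod_cast h)
    have hu0 : u = 0 := by linarith
    rw [← hu, hu0, WithTop.coe_zero]
  calc w (-x) = w ((-1) * x) := by rw [neg_one_mul]
  _ = w (-1) + w x := hwmul _ _
  _ = w x := by rw [hn1, zero_add]

lemma w_prod (hw0 : ∀ x : L, w x = ⊤ ↔ x = 0)
    (hwmul : ∀ x y : L, w (x * y) = w x + w y) (M : Multiset L) :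
    w M.prod = (M.map w).sum := by
  induction M using Multiset.induction_on with
  | empty => simpa using w_one w hw0 hwmul
  | cons a M ih => rw [Multiset.prod_cons, hwmul, Multiset.map_cons, Multiset.sum_cons, ih]

lemma le_w_sum (hw0 : ∀ x : L, w x = ⊤ ↔ x = 0)
    (hwadd : ∀ x y : L, min (w x) (w y) ≤ w (x + y))
    (M : Multiset L) (b c : WithTop ℝ) (h : ∀ y ∈ M, b ≤ w y + c) :
    b ≤ w M.sum + c := by
  induction M using Multiset.induction_on with
  | empty =>
    have : w (0 : L) = ⊤ := (hw0 0).mpr rfl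
    simp [this, top_add]
  | cons a M ih =>
    have h1 : b ≤ w M.sum + c := ih fun y hy => h y (Multiset.mem_cons_of_mem hy)
    have h2 : b ≤ w a + c := h a (Multiset.mem_cons_self a M)
    rw [Multiset.sum_cons]
    calc b ≤ min (w a + c) (w M.sum + c) := le_min h2 h1
    _ = min (w a) (w M.sum) + c := min_add_add_right _ _ _
    _ ≤ w (a + M.sum) + c := add_le_add_left (hwadd _ _) c

lemma w_add_eq_left (hw0 : ∀ x : L, w x = ⊤ ↔ x = 0)
    (hwmul : ∀ x y : L, w (x * y) = w x + w y)
    (hwadd : ∀ x y : L, min (w x) (w y) ≤ w (x + y))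
    (x z : L) (h : w x < w z) : w (x + z) = w x := by
  refine le_antisymm ?_ ?_
  · have h1 : min (w (x + z)) (w (-z)) ≤ w x := by
      have := hwadd (x + z) (-z)
      simpa using this
    rw [w_neg w hw0 hwmul] at h1
    rcases min_cases (w (x + z)) (w z) with ⟨he, _⟩ | ⟨he, hlt⟩
    · rwa [he] at h1
    · rw [he] at h1; exact absurd (lt_of_lt_of_le h h1) (lt_irrefl _)
  · calc w x = min (w x) (w z) := (min_eq_left h.le).symm
    _ ≤ w (x + z) := hwadd x z

lemma w_lt_sum (hw0 : ∀ x : L, w x = ⊤ ↔ x = 0)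
    (hwadd : ∀ x y : L, min (w x) (w y) ≤ w (x + y))
    (b : WithTop ℝ) (hb : b ≠ ⊤) (M : Multiset L) (h : ∀ y ∈ M, b < w y) :
    b < w M.sum := by
  induction M using Multiset.induction_on with
  | empty =>
    have : w (0 : L) = ⊤ := (hw0 0).mpr rfl
    simp [this, lt_top_iff_ne_top, hb]
  | cons a M ih =>
    rw [Multiset.sum_cons]
    have h1 : b < w M.sum := ih fun y hy => h y (Multiset.mem_cons_of_mem hy)
    have h2 : b < w a := h a (Multiset.mem_cons_self a M)
    calc b < min (w a) (w M.sum) := lt_min h2 h1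
    _ ≤ w (a + M.sum) := hwadd _ _

lemma w_sum_cons_eq (hw0 : ∀ x : L, w x = ⊤ ↔ x = 0)
    (hwmul : ∀ x y : L, w (x * y) = w x + w y)
    (hwadd : ∀ x y : L, min (w x) (w y) ≤ w (x + y))
    (x : L) (M : Multiset L) (hx : w x ≠ ⊤) (h : ∀ y ∈ M, w x < w y) :
    w (x ::ₘ M).sum = w x := by
  rw [Multiset.sum_cons]
  exact w_add_eq_left w hw0 hwmul hwadd x M.sum
    (w_lt_sum w hw0 hwadd (w x) hx M h)

end W

lemma multiset_sum_lt_sum (M N : Multiset (WithTop ℝ)) (hcard : Multiset.card M = Multiset.card N)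
    (hpos : M ≠ 0) (hMtop : M.sum ≠ ⊤) (h : ∀ a ∈ M, ∀ b ∈ N, a < b) :
    M.sum < N.sum := by
  induction M using Multiset.induction_on generalizing N with
  | empty => exact absurd rfl hpos
  | cons a M ih =>
    have hN0 : N ≠ 0 := by
      intro h0
      rw [h0] at hcard
      simp at hcard
    obtain ⟨b, hb⟩ := Multiset.exists_mem_of_ne_zero hN0
    obtain ⟨N', rfl⟩ := Multiset.exists_cons_of_mem hb
    have hab : a < b := h a (Multiset.mem_cons_self a M) b (Multiset.mem_cons_self b N')
    rw [Multiset.sum_cons, Multiset.sum_cons]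
    rw [Multiset.sum_cons, WithTop.add_ne_top] at hMtop
    rw [Multiset.card_cons, Multiset.card_cons] at hcard
    rcases eq_or_ne M 0 with rfl | hM0
    · have hN'0 : N' = 0 := Multiset.card_eq_zero.mp
        (by simp only [Multiset.card_zero] at hcard; omega)
      subst hN'0
      simpa using hab
    · have hMN' : M.sum < N'.sum :=
        ih N' (by omega) hM0 hMtop.2 fun x hx y hy =>
          h x (Multiset.mem_cons_of_mem hx) y (Multiset.mem_cons_of_mem hy)
      exact add_lt_add' hab hMN'.le hMtop.2

lemma count_filter_powersetCard (p : L → Prop) [DecidablePred p] (s : Multiset L) :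
    Multiset.count (s.filter p) (s.powersetCard (Multiset.card (s.filter p))) = 1 := by
  induction s using Multiset.induction_on with
  | empty => simp
  | cons x s ih =>
    by_cases hx : p x
    · rw [Multiset.filter_cons_of_pos _ hx, Multiset.card_cons, Multiset.powersetCard_cons,
        Multiset.count_add]
      have h1 : Multiset.count (x ::ₘ s.filter p)
          (Multiset.powersetCard (Multiset.card (s.filter p) + 1) s) = 0 := by
        rw [Multiset.count_eq_zero]
        intro hmem
        rw [Multiset.mem_powersetCard] at hmem
        have hle := Multiset.le_iff_count.mp hmem.1 x
        rw [Multiset.count_cons_self, Multiset.count_filter_of_pos hx] at hle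
        omega
      have h2 : Multiset.count (x ::ₘ s.filter p)
          ((Multiset.powersetCard (Multiset.card (s.filter p)) s).map (Multiset.cons x)) =
          Multiset.count (s.filter p) (Multiset.powersetCard (Multiset.card (s.filter p)) s) :=
        Multiset.count_map_eq_count' _ _ (fun _ _ hh => (Multiset.cons_inj_right x).mp hh) _
      rw [h1, h2, ih, zero_add]
    · rw [Multiset.filter_cons_of_neg _ hx]
      rcases Nat.eq_zero_or_pos (Multiset.card (s.filter p)) with h0 | hpos
      · rw [Multiset.card_eq_zero] at h0
        rw [h0]
        simp
      · obtain ⟨n, hn⟩ : ∃ n, Multiset.card (s.filter p) = n + 1 :=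
          ⟨_, (Nat.succ_pred_eq_of_pos hpos).symm⟩
        have h2 : Multiset.count (s.filter p)
            ((Multiset.powersetCard n s).map (Multiset.cons x)) = 0 := by
          rw [Multiset.count_eq_zero]
          intro hmem
          obtain ⟨T, _, hT2⟩ := Multiset.mem_map.mp hmem
          have hxA : x ∈ s.filter p := hT2 ▸ Multiset.mem_cons_self x T
          exact hx (Multiset.of_mem_filter hxA)
        rw [hn, Multiset.powersetCard_cons, Multiset.count_add, ← hn, ih, h2, add_zero]

variable (w : L → WithTop ℝ)

/-- Strict minimality of the saturated filter subset among subsets of the same size. -/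
lemma filter_sum_lt (G : L → Prop) [DecidablePred G] (s : Multiset L)
    (hG : ∀ x ∈ s, ∀ y ∈ s, G x → ¬ G y → w x < w y)
    (hfin : ((s.filter G).map w).sum ≠ ⊤)
    (T : Multiset L) (hTs : T ≤ s) (hcard : Multiset.card T = Multiset.card (s.filter G))
    (hne : T ≠ s.filter G) :
    ((s.filter G).map w).sum < (T.map w).sum := by
  set A := s.filter G with hA
  set I := T ∩ A with hI
  have hIT : I ≤ T := Multiset.inter_le_left
  have hIA : I ≤ A := Multiset.inter_le_right
  have hTdecomp : I + (T - I) = T := by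
    rw [add_comm]; exact tsub_add_cancel_of_le hIT
  have hAdecomp : I + (A - I) = A := by
    rw [add_comm]; exact tsub_add_cancel_of_le hIA
  have hkeyT : ∀ y ∈ T - I, ¬ G y ∧ y ∈ s := by
    intro y hy
    have hc : 0 < Multiset.count y T - Multiset.count y I := by
      rw [← Multiset.count_sub]; exact Multiset.count_pos.mpr hy
    have hcI : Multiset.count y I = min (Multiset.count y T) (Multiset.count y A) :=
      Multiset.count_inter y T A
    have hAT : Multiset.count y A < Multiset.count y T := by omega
    have hys : y ∈ s := Multiset.mem_of_le hTs (by
      have : 0 < Multiset.count y T := by omega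
      exact Multiset.count_pos.mp this)
    refine ⟨fun hGy => ?_, hys⟩
    have h1 : Multiset.count y A = Multiset.count y s := by
      rw [hA, Multiset.count_filter_of_pos hGy]
    have h2 : Multiset.count y T ≤ Multiset.count y s := Multiset.le_iff_count.mp hTs y
    omega
  have hkeyA : ∀ x ∈ A - I, G x ∧ x ∈ s := by
    intro x hx
    have hxA : x ∈ A := Multiset.mem_of_le (tsub_le_self) hx
    exact ⟨Multiset.of_mem_filter hxA, Multiset.mem_of_mem_filter hxA⟩
  have hcardTI : Multiset.card (T - I) = Multiset.card (A - I) := by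
    rw [Multiset.card_sub hIT, Multiset.card_sub hIA, hcard]
  have hAI0 : A - I ≠ 0 := by
    intro h0
    have hIA' : Multiset.card (A - I) = 0 := by rw [h0]; simp
    rw [Multiset.card_sub hIA] at hIA'
    have hcardIA : Multiset.card A ≤ Multiset.card I := by
      have := Multiset.card_le_card hIA
      omega
    have hIAeq : I = A := Multiset.eq_of_le_of_card_le hIA hcardIA
    have hcardIT : Multiset.card T ≤ Multiset.card I := by rw [hIAeq, hcard]
    have hITeq : I = T := Multiset.eq_of_le_of_card_le hIT hcardIT
    exact hne (hITeq ▸ hIAeq)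
  have hfinI : (I.map w).sum ≠ ⊤ ∧ ((A - I).map w).sum ≠ ⊤ := by
    rw [← hAdecomp, Multiset.map_add, Multiset.sum_add, WithTop.add_ne_top] at hfin
    exact hfin
  have hlt : ((A - I).map w).sum < ((T - I).map w).sum := by
    refine multiset_sum_lt_sum _ _ (by rw [Multiset.card_map, Multiset.card_map, hcardTI])
      (by simpa using hAI0) hfinI.2 ?_
    rintro a ha b hb
    obtain ⟨x, hx, rfl⟩ := Multiset.mem_map.mp ha
    obtain ⟨y, hy, rfl⟩ := Multiset.mem_map.mp hb
    obtain ⟨hGx, hxs⟩ := hkeyA x hx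
    obtain ⟨hGy, hys⟩ := hkeyT y hy
    exact hG x hxs y hys hGx hGy
  calc (A.map w).sum = (I.map w).sum + ((A - I).map w).sum := by
        rw [← hAdecomp]; simp [Multiset.map_add, Multiset.sum_add]
  _ < (I.map w).sum + ((T - I).map w).sum := WithTop.add_lt_add_left hfinI.1 hlt
  _ = (T.map w).sum := by
        conv_rhs => rw [← hTdecomp]
        simp [Multiset.map_add, Multiset.sum_add]

/-- The valuation of the `card (filter G s)`-th elementary symmetric polynomial
equals the sum of the valuations of the elements of `filter G s`. -/
lemma w_esymm_filter (hw0 : ∀ x : L, w x = ⊤ ↔ x = 0)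
    (hwmul : ∀ x y : L, w (x * y) = w x + w y)
    (hwadd : ∀ x y : L, min (w x) (w y) ≤ w (x + y))
    (G : L → Prop) [DecidablePred G] (s : Multiset L)
    (hG : ∀ x ∈ s, ∀ y ∈ s, G x → ¬ G y → w x < w y)
    (hfin : ((s.filter G).map w).sum ≠ ⊤) :
    w (s.esymm (Multiset.card (s.filter G))) = ((s.filter G).map w).sum := by
  classical
  set A := s.filter G with hA
  set a := Multiset.card A with ha
  have hmemA : A ∈ s.powersetCard a := Multiset.mem_powersetCard.mpr ⟨Multiset.filter_le _ _, rfl⟩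
  have hcount : Multiset.count A (s.powersetCard a) = 1 := by
    have := count_filter_powersetCard G s
    rwa [← hA] at this
  have hP : s.powersetCard a = A ::ₘ (s.powersetCard a).erase A :=
    (Multiset.cons_erase hmemA).symm
  have hwA : w A.prod = (A.map w).sum := w_prod w hw0 hwmul A
  rw [Multiset.esymm, hP, Multiset.map_cons]
  rw [w_sum_cons_eq w hw0 hwmul hwadd _ _ (hwA ▸ hfin) ?_]
  · exact hwA
  · intro y hy
    obtain ⟨T, hT, rfl⟩ := Multiset.mem_map.mp hy
    have hTA : T ≠ A := by
      intro hTAeq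
      have h' := Multiset.count_erase_self A (s.powersetCard a)
      rw [hcount] at h'
      have hmem' : A ∈ (s.powersetCard a).erase A := hTAeq ▸ hT
      have := Multiset.count_pos.mpr hmem'
      omega
    have hTP : T ∈ s.powersetCard a := Multiset.mem_of_mem_erase hT
    rw [Multiset.mem_powersetCard] at hTP
    rw [hwA, w_prod w hw0 hwmul T]
    exact filter_sum_lt w G s hG hfin T hTP.1 (hTP.2.trans ha) hTA

lemma exists_lt_bound (M : Multiset (WithTop ℝ)) (r : ℝ) (h : ∀ x ∈ M, x < (r : WithTop ℝ)) :
    ∃ t₀ : ℝ, t₀ < r ∧ ∀ x ∈ M, x ≤ (t₀ : WithTop ℝ) := by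
  induction M using Multiset.induction_on with
  | empty => exact ⟨r - 1, by linarith, by simp⟩
  | cons a M ih =>
    obtain ⟨t₀, ht₀, hb⟩ := ih fun x hx => h x (Multiset.mem_cons_of_mem hx)
    have ha := h a (Multiset.mem_cons_self a M)
    have hane : a ≠ ⊤ := ne_top_of_lt ha
    obtain ⟨u, hu⟩ := WithTop.ne_top_iff_exists.mp hane
    rw [← hu, WithTop.coe_lt_coe] at ha
    refine ⟨max u t₀, by simp [ha, ht₀], ?_⟩
    intro x hx
    rcases Multiset.mem_cons.mp hx with rfl | hx
    · rw [← hu, WithTop.coe_le_coe]; exact le_max_left u t₀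
    · exact (hb x hx).trans (by exact_mod_cast le_max_right u t₀)

lemma exists_gt_bound (M : Multiset (WithTop ℝ)) (r : ℝ) (h : ∀ x ∈ M, (r : WithTop ℝ) < x) :
    ∃ t₁ : ℝ, r < t₁ ∧ ∀ x ∈ M, (t₁ : WithTop ℝ) ≤ x := by
  induction M using Multiset.induction_on with
  | empty => exact ⟨r + 1, by linarith, by simp⟩
  | cons a M ih =>
    obtain ⟨t₁, ht₁, hb⟩ := ih fun x hx => h x (Multiset.mem_cons_of_mem hx)
    have ha := h a (Multiset.mem_cons_self a M)
    rcases eq_or_ne a ⊤ with rfl | hane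
    · exact ⟨t₁, ht₁, fun x hx => by
        rcases Multiset.mem_cons.mp hx with rfl | hx
        · exact le_top
        · exact hb x hx⟩
    · obtain ⟨u, hu⟩ := WithTop.ne_top_iff_exists.mp hane
      rw [← hu, WithTop.coe_lt_coe] at ha
      refine ⟨min u t₁, by simp [ha, ht₁], ?_⟩
      intro x hx
      rcases Multiset.mem_cons.mp hx with rfl | hx
      · rw [← hu, WithTop.coe_le_coe]; exact min_le_left u t₁
      · exact le_trans (by exact_mod_cast min_le_right u t₁) (hb x hx)

end S7

/-- Let `K` be a field with an additive real-valued valuation `v`, let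
`L` be an algebraic closure of `K` and `w` an additive real-valued valuation on `L`
extending `v`.  Let `P ∈ K[X]` have degree `d ≥ 1`, and suppose the complete valuation
polygon `NP(P)(t) = min{v(aᵢ) + i·t : aᵢ ≠ 0}` is given by the affine function
`sm·t + bm` on `[r − ε, r]` and by `sp·t + bp` on `[r, r + ε]`, with `sm > sp` (so that
`NP(P)` has a break at `r` where the slope drops by `sm − sp`).  Then the number of roots
`α` of `P` in `L`, counted with multiplicity, with `w α = r` equals `sm − sp`. -/
theorem statement7 {K L : Type*} [Field K] [Field L] [Algebra K L] [IsAlgClosure K L]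
    (v : K → WithTop ℝ)
    (hv0 : ∀ x : K, v x = ⊤ ↔ x = 0)
    (hvmul : ∀ x y : K, v (x * y) = v x + v y)
    (hvadd : ∀ x y : K, min (v x) (v y) ≤ v (x + y))
    (w : L → WithTop ℝ)
    (hw0 : ∀ x : L, w x = ⊤ ↔ x = 0)
    (hwmul : ∀ x y : L, w (x * y) = w x + w y)
    (hwadd : ∀ x y : L, min (w x) (w y) ≤ w (x + y))
    (hext : ∀ x : K, w (algebraMap K L x) = v x)
    (P : Polynomial K) {d : ℕ} (hd : 1 ≤ d) (hdeg : P.natDegree = d)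
    (hlead : P.coeff d ≠ 0)
    (r ε sm sp bm bp : ℝ) (hε : 0 < ε) (hs : sp < sm)
    (hNPm : ∀ t ∈ Set.Icc (r - ε) r,
      IsLeast {x : WithTop ℝ | ∃ i : ℕ, P.coeff i ≠ 0 ∧
          x = v (P.coeff i) + (((i : ℝ) * t : ℝ) : WithTop ℝ)}
        ((sm * t + bm : ℝ) : WithTop ℝ))
    (hNPp : ∀ t ∈ Set.Icc r (r + ε),
      IsLeast {x : WithTop ℝ | ∃ i : ℕ, P.coeff i ≠ 0 ∧
          x = v (P.coeff i) + (((i : ℝ) * t : ℝ) : WithTop ℝ)}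
        ((sp * t + bp : ℝ) : WithTop ℝ)) :
    ((((P.map (algebraMap K L)).roots.filter
        (fun α => w α = ((r : ℝ) : WithTop ℝ))).card : ℝ)) = sm - sp := by
  have hIAC : IsAlgClosed L := IsAlgClosure.isAlgClosed K
  set Q := P.map (algebraMap K L) with hQ
  have hP0 : P ≠ 0 := fun h => hlead (by simp [h])
  have hQdeg : Q.natDegree = d := by rw [hQ, Polynomial.natDegree_map, hdeg]
  have hwcoeff : ∀ i, w (Q.coeff i) = v (P.coeff i) := fun i => by
    rw [hQ, Polynomial.coeff_map]; exact hext _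
  set s := Q.roots with hs_def
  have hroots : Multiset.card s = d := by
    rw [hs_def, ← hQdeg]
    exact Polynomial.splits_iff_card_roots.mp (IsAlgClosed.splits Q)
  -- leading coefficient valuation
  have hwl_ne : w (Q.coeff d) ≠ ⊤ := by
    rw [hwcoeff]
    exact fun h => hlead ((hv0 _).mp h)
  obtain ⟨wl, hwl⟩ := WithTop.ne_top_iff_exists.mp hwl_ne
  -- coefficient via esymm
  have hwm1k : ∀ k : ℕ, w ((-1 : L) ^ k) = 0 := by
    intro k
    rcases Nat.even_or_odd k with he | ho
    · rw [he.neg_one_pow]; exact S7.w_one w hw0 hwmul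
    · rw [ho.neg_one_pow]
      exact (S7.w_neg w hw0 hwmul 1).trans (S7.w_one w hw0 hwmul)
  have hw_coeff_esymm : ∀ k, k ≤ d → w (Q.coeff (d - k)) = w (Q.coeff d) + w (s.esymm k) := by
    intro k hk
    have hcardroots : Multiset.card Q.roots = Q.natDegree := by rw [hQdeg]; exact hroots
    have h1 := Polynomial.coeff_eq_esymm_roots_of_card hcardroots
      (k := d - k) (by rw [hQdeg]; omega)
    rw [hQdeg, Nat.sub_sub_self hk] at h1
    have hlead' : Q.leadingCoeff = Q.coeff d := by rw [Polynomial.leadingCoeff, hQdeg]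
    rw [h1, hwmul, hwmul, hlead', hwm1k, add_zero]
  -- the three parts
  set B := s.filter (fun α => w α = ((r : ℝ) : WithTop ℝ)) with hB
  set A := s.filter (fun α => w α < ((r : ℝ) : WithTop ℝ)) with hA
  set C := s.filter (fun α => ((r : ℝ) : WithTop ℝ) < w α) with hC
  set AB := s.filter (fun α => w α ≤ ((r : ℝ) : WithTop ℝ)) with hAB
  have hABeq : A + B = AB := by
    rw [hA, hB, hAB, Multiset.filter_add_filter]
    have h1 : s.filter (fun a => w a < (↑r : WithTop ℝ) ∨ w a = ↑r) =
        s.filter (fun α => w α ≤ (↑r : WithTop ℝ)) :=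
      Multiset.filter_congr fun x _ => le_iff_lt_or_eq.symm
    have h2 : s.filter (fun a => w a < (↑r : WithTop ℝ) ∧ w a = ↑r) = 0 := by
      rw [Multiset.filter_eq_nil]
      rintro a _ ⟨hlt, heq⟩
      exact absurd heq (ne_of_lt hlt)
    rw [h1, h2, add_zero]
  have hsplit : s = A + B + C := by
    have h0 := Multiset.filter_add_not (fun α => w α ≤ ((r : ℝ) : WithTop ℝ)) s
    have h1 : s.filter (fun a => ¬ w a ≤ ((r : ℝ) : WithTop ℝ)) = C :=
      Multiset.filter_congr fun x _ => not_le
    rw [hABeq, hAB, ← h1]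
    exact h0.symm
  set a := Multiset.card A with ha
  set m := Multiset.card B with hm
  set c := Multiset.card C with hc
  have hd_sum : a + m + c = d := by
    rw [ha, hm, hc, ← hroots, hsplit]
    simp [Multiset.card_add]
  -- sum of valuations over A
  have hA_lt : ∀ x ∈ A, w x < (↑r : WithTop ℝ) := by
    intro x hx
    rw [hA] at hx
    exact (Multiset.mem_filter.mp hx).2
  have hB_eq : ∀ x ∈ B, w x = ((r : ℝ) : WithTop ℝ) := by
    intro x hx
    rw [hB] at hx
    exact (Multiset.mem_filter.mp hx).2
  have hC_gt : ∀ x ∈ C, ((r : ℝ) : WithTop ℝ) < w x := by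
    intro x hx
    rw [hC] at hx
    exact (Multiset.mem_filter.mp hx).2
  have hSA_ne : ((A.map w).sum : WithTop ℝ) ≠ ⊤ := by
    apply S7.sum_ne_top
    intro x hx
    obtain ⟨y, hy, rfl⟩ := Multiset.mem_map.mp hx
    exact ne_top_of_lt (hA_lt y hy)
  obtain ⟨sa, hsa⟩ := WithTop.ne_top_iff_exists.mp hSA_ne
  -- B sum
  have hBsum : (B.map w).sum = ((m * r : ℝ) : WithTop ℝ) := by
    have hrep : B.map w = Multiset.replicate m ((r : ℝ) : WithTop ℝ) :=
      Multiset.eq_replicate.mpr ⟨by rw [Multiset.card_map, hm], by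
        rintro b hb
        obtain ⟨y, hy, rfl⟩ := Multiset.mem_map.mp hb
        exact hB_eq y hy⟩
    rw [hrep, Multiset.sum_replicate, S7.coe_nsmul_real]
  -- esymm valuations
  have hGA : ∀ x ∈ s, ∀ y ∈ s, (w x < (↑r : WithTop ℝ)) → ¬ (w y < (↑r : WithTop ℝ)) →
      w x < w y := fun x _ y _ hx hy => lt_of_lt_of_le hx (not_lt.mp hy)
  have hesA : w (s.esymm a) = ↑sa := by
    have h := S7.w_esymm_filter w hw0 hwmul hwadd
      (fun α => w α < ((r : ℝ) : WithTop ℝ)) s hGA (by rw [← hA]; exact hSA_ne)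
    rw [← hA, ← ha, ← hsa] at h
    exact h
  have hGAB : ∀ x ∈ s, ∀ y ∈ s, (w x ≤ (↑r : WithTop ℝ)) → ¬ (w y ≤ (↑r : WithTop ℝ)) →
      w x < w y := fun x _ y _ hx hy => lt_of_le_of_lt hx (not_le.mp hy)
  have hABsum : (AB.map w).sum = ((sa + m * r : ℝ) : WithTop ℝ) := by
    rw [← hABeq, Multiset.map_add, Multiset.sum_add, ← hsa, hBsum, ← WithTop.coe_add]
  have hcardAB : Multiset.card AB = a + m := by
    rw [← hABeq, Multiset.card_add, ha, hm]
  have hesAB : w (s.esymm (a + m)) = ((sa + m * r : ℝ) : WithTop ℝ) := by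
    have h := S7.w_esymm_filter w hw0 hwmul hwadd
      (fun α => w α ≤ ((r : ℝ) : WithTop ℝ)) s hGAB
      (by rw [← hAB, hABsum]; exact WithTop.coe_ne_top)
    rw [← hAB, hcardAB, hABsum] at h
    exact h
  -- the key coefficients
  have haled : a ≤ d := by omega
  have hamled : a + m ≤ d := by omega
  have hvA : v (P.coeff (d - a)) = ((wl + sa : ℝ) : WithTop ℝ) := by
    rw [← hwcoeff, hw_coeff_esymm a haled, hesA, ← hwl, ← WithTop.coe_add]
  have hvAB : v (P.coeff (d - (a + m))) = ((wl + (sa + m * r) : ℝ) : WithTop ℝ) := by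
    rw [← hwcoeff, hw_coeff_esymm (a + m) hamled, hesAB, ← hwl, ← WithTop.coe_add]
  have hPA0 : P.coeff (d - a) ≠ 0 := by
    intro h0
    rw [(hv0 _).mpr h0] at hvA
    exact WithTop.coe_ne_top hvA.symm
  have hPAB0 : P.coeff (d - (a + m)) ≠ 0 := by
    intro h0
    rw [(hv0 _).mpr h0] at hvAB
    exact WithTop.coe_ne_top hvAB.symm
  -- lower bound
  have hlower : ∀ (t : ℝ) (i : ℕ), P.coeff i ≠ 0 →
      ((wl : ℝ) : WithTop ℝ) + (s.map (fun x => min (w x) ((t : ℝ) : WithTop ℝ))).sum ≤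
        v (P.coeff i) + (((i : ℝ) * t : ℝ) : WithTop ℝ) := by
    intro t i hi
    have hid : i ≤ d := hdeg ▸ Polynomial.le_natDegree_of_ne_zero hi
    have hdk : d - (d - i) = i := by omega
    have h1 : v (P.coeff i) = w (Q.coeff d) + w (s.esymm (d - i)) := by
      rw [← hwcoeff, ← hdk, hw_coeff_esymm (d - i) (by omega), hdk]
    rw [h1, ← hwl, add_assoc]
    apply add_le_add_right
    rw [Multiset.esymm]
    apply S7.le_w_sum w hw0 hwadd
    intro y hy
    obtain ⟨T, hT, rfl⟩ := Multiset.mem_map.mp hy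
    rw [Multiset.mem_powersetCard] at hT
    obtain ⟨hTs, hTcard⟩ := hT
    rw [S7.w_prod w hw0 hwmul]
    have hsT : s = T + (s - T) := by rw [add_comm]; exact (tsub_add_cancel_of_le hTs).symm
    have hTpart : (T.map (fun x => min (w x) ((t : ℝ) : WithTop ℝ))).sum ≤ (T.map w).sum :=
      Multiset.sum_map_le_sum_map _ _ fun x _ => min_le_left _ _
    have hSTpart : ((s - T).map (fun x => min (w x) ((t : ℝ) : WithTop ℝ))).sum ≤
        (((i : ℝ) * t : ℝ) : WithTop ℝ) := by
      have hle : ((s - T).map (fun x => min (w x) ((t : ℝ) : WithTop ℝ))).sum ≤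
          ((s - T).map (fun _ => ((t : ℝ) : WithTop ℝ))).sum :=
        Multiset.sum_map_le_sum_map _ _ fun x _ => min_le_right _ _
      have hcardST : Multiset.card (s - T) = i := by
        rw [Multiset.card_sub hTs, hroots, hTcard]; omega
      rw [Multiset.map_const', Multiset.sum_replicate, hcardST, S7.coe_nsmul_real] at hle
      exact hle
    calc (s.map (fun x => min (w x) ((t : ℝ) : WithTop ℝ))).sum
        = (T.map (fun x => min (w x) ((t : ℝ) : WithTop ℝ))).sum +
          ((s - T).map (fun x => min (w x) ((t : ℝ) : WithTop ℝ))).sum := by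
          conv_lhs => rw [hsT]
          rw [Multiset.map_add, Multiset.sum_add]
    _ ≤ (T.map w).sum + (((i : ℝ) * t : ℝ) : WithTop ℝ) := add_le_add hTpart hSTpart
  -- Smin evaluation, left
  have hSmin_left : ∀ t : ℝ, (∀ x ∈ A, w x ≤ (↑t : WithTop ℝ)) → t ≤ r →
      (s.map (fun x => min (w x) ((t : ℝ) : WithTop ℝ))).sum =
        ((sa + (m + c) * t : ℝ) : WithTop ℝ) := by
    intro t hbound htr
    rw [hsplit, Multiset.map_add, Multiset.map_add, Multiset.sum_add, Multiset.sum_add]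
    have h1 : A.map (fun x => min (w x) ((t : ℝ) : WithTop ℝ)) = A.map w :=
      Multiset.map_congr rfl fun x hx => min_eq_left (hbound x hx)
    have h2 : B.map (fun x => min (w x) ((t : ℝ) : WithTop ℝ)) =
        B.map (fun _ => ((t : ℝ) : WithTop ℝ)) :=
      Multiset.map_congr rfl fun x hx => by
        rw [hB_eq x hx]
        exact min_eq_right (by exact_mod_cast htr)
    have h3 : C.map (fun x => min (w x) ((t : ℝ) : WithTop ℝ)) =
        C.map (fun _ => ((t : ℝ) : WithTop ℝ)) :=
      Multiset.map_congr rfl fun x hx => min_eq_right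
        (le_trans (by exact_mod_cast htr) (le_of_lt (hC_gt x hx)))
    rw [h1, h2, h3, ← hsa, Multiset.map_const', Multiset.sum_replicate,
      Multiset.map_const', Multiset.sum_replicate, ← hm, ← hc,
      S7.coe_nsmul_real, S7.coe_nsmul_real, ← WithTop.coe_add, ← WithTop.coe_add,
      WithTop.coe_inj]
    push_cast
    ring
  -- Smin evaluation, right
  have hSmin_right : ∀ t : ℝ, (∀ x ∈ C, (↑t : WithTop ℝ) ≤ w x) → r ≤ t →
      (s.map (fun x => min (w x) ((t : ℝ) : WithTop ℝ))).sum =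
        ((sa + m * r + c * t : ℝ) : WithTop ℝ) := by
    intro t hbound hrt
    rw [hsplit, Multiset.map_add, Multiset.map_add, Multiset.sum_add, Multiset.sum_add]
    have h1 : A.map (fun x => min (w x) ((t : ℝ) : WithTop ℝ)) = A.map w :=
      Multiset.map_congr rfl fun x hx => min_eq_left
        (le_trans (le_of_lt (hA_lt x hx)) (by exact_mod_cast hrt))
    have h2 : B.map (fun x => min (w x) ((t : ℝ) : WithTop ℝ)) =
        B.map (fun _ => ((r : ℝ) : WithTop ℝ)) :=
      Multiset.map_congr rfl fun x hx => by
        rw [hB_eq x hx]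
        exact min_eq_left (by exact_mod_cast hrt)
    have h3 : C.map (fun x => min (w x) ((t : ℝ) : WithTop ℝ)) =
        C.map (fun _ => ((t : ℝ) : WithTop ℝ)) :=
      Multiset.map_congr rfl fun x hx => min_eq_right (hbound x hx)
    rw [h1, h2, h3, ← hsa, Multiset.map_const', Multiset.sum_replicate,
      Multiset.map_const', Multiset.sum_replicate, ← hm, ← hc,
      S7.coe_nsmul_real, S7.coe_nsmul_real, ← WithTop.coe_add, ← WithTop.coe_add]
  -- IsLeast, left
  have hmc_eq : d - a = m + c := by omega
  have hc_eq : d - (a + m) = c := by omega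
  have hleast_left : ∀ t : ℝ, (∀ x ∈ A, w x ≤ (↑t : WithTop ℝ)) → t ≤ r →
      IsLeast {x : WithTop ℝ | ∃ i : ℕ, P.coeff i ≠ 0 ∧
          x = v (P.coeff i) + (((i : ℝ) * t : ℝ) : WithTop ℝ)}
        ((wl + sa + (m + c) * t : ℝ) : WithTop ℝ) := by
    intro t hbound htr
    constructor
    · refine ⟨d - a, hPA0, ?_⟩
      rw [hvA, ← WithTop.coe_add, WithTop.coe_inj, hmc_eq]
      push_cast
      ring
    · rintro x ⟨i, hi, rfl⟩
      have h := hlower t i hi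
      rw [hSmin_left t hbound htr, ← WithTop.coe_add] at h
      calc ((wl + sa + (m + c) * t : ℝ) : WithTop ℝ)
          = ((wl + (sa + (m + c) * t) : ℝ) : WithTop ℝ) := by rw [← add_assoc]
      _ ≤ _ := h
  have hleast_right : ∀ t : ℝ, (∀ x ∈ C, (↑t : WithTop ℝ) ≤ w x) → r ≤ t →
      IsLeast {x : WithTop ℝ | ∃ i : ℕ, P.coeff i ≠ 0 ∧
          x = v (P.coeff i) + (((i : ℝ) * t : ℝ) : WithTop ℝ)}
        ((wl + sa + m * r + c * t : ℝ) : WithTop ℝ) := by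
    intro t hbound hrt
    constructor
    · refine ⟨d - (a + m), hPAB0, ?_⟩
      rw [hvAB, ← WithTop.coe_add, WithTop.coe_inj, hc_eq]
      push_cast
      ring
    · rintro x ⟨i, hi, rfl⟩
      have h := hlower t i hi
      rw [hSmin_right t hbound hrt, ← WithTop.coe_add] at h
      calc ((wl + sa + m * r + c * t : ℝ) : WithTop ℝ)
          = ((wl + (sa + m * r + c * t) : ℝ) : WithTop ℝ) := by ring_nf
      _ ≤ _ := h
  -- choose points on the left
  obtain ⟨t₀, ht₀r, ht₀b⟩ := S7.exists_lt_bound (A.map w) r (by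
    intro x hx
    obtain ⟨y, hy, rfl⟩ := Multiset.mem_map.mp hx
    exact hA_lt y hy)
  set l := max t₀ (r - ε) with hl
  have hlr : l < r := by
    rw [hl]
    exact max_lt ht₀r (by linarith)
  set t' := (l + r) / 2 with ht'
  have ht'1 : l < t' := by rw [ht']; linarith
  have ht'2 : t' < r := by rw [ht']; linarith
  have hboundA : ∀ u : ℝ, l ≤ u → ∀ x ∈ A, w x ≤ (↑u : WithTop ℝ) := by
    intro u hu x hx
    have h1 : w x ≤ (↑t₀ : WithTop ℝ) := ht₀b (w x) (Multiset.mem_map_of_mem w hx)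
    refine h1.trans ?_
    exact_mod_cast le_trans (le_max_left t₀ (r - ε)) hu
  have hE1 : sm * r + bm = wl + sa + (m + c) * r := by
    have h := (hNPm r ⟨by linarith, le_refl r⟩).unique
      (hleast_left r (hboundA r hlr.le) (le_refl r))
    exact_mod_cast h
  have hE2 : sm * t' + bm = wl + sa + (m + c) * t' := by
    have h := (hNPm t' ⟨by
        have : r - ε ≤ l := le_max_right t₀ (r - ε)
        linarith, ht'2.le⟩).unique
      (hleast_left t' (hboundA t' ht'1.le) ht'2.le)
    exact_mod_cast h
  have hsm : sm = (m : ℝ) + c := by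
    have hz : (sm - ((m : ℝ) + c)) * (r - t') = 0 := by
      linear_combination hE1 - hE2
    rcases mul_eq_zero.mp hz with h | h
    · linarith
    · exact absurd (sub_eq_zero.mp h) (ne_of_gt ht'2)
  -- choose points on the right
  obtain ⟨t₁, ht₁r, ht₁b⟩ := S7.exists_gt_bound (C.map w) r (by
    intro x hx
    obtain ⟨y, hy, rfl⟩ := Multiset.mem_map.mp hx
    exact hC_gt y hy)
  set u := min t₁ (r + ε) with hu
  have hru : r < u := by
    rw [hu]
    exact lt_min ht₁r (by linarith)
  set t'' := (r + u) / 2 with ht''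
  have ht''1 : r < t'' := by rw [ht'']; linarith
  have ht''2 : t'' < u := by rw [ht'']; linarith
  have hboundC : ∀ q : ℝ, q ≤ t₁ → ∀ x ∈ C, (↑q : WithTop ℝ) ≤ w x := by
    intro q hq x hx
    have h1 : (↑t₁ : WithTop ℝ) ≤ w x := ht₁b (w x) (Multiset.mem_map_of_mem w hx)
    exact le_trans (by exact_mod_cast hq) h1
  have hE3 : sp * r + bp = wl + sa + m * r + c * r := by
    have h := (hNPp r ⟨le_refl r, by linarith⟩).unique
      (hleast_right r (hboundC r ht₁r.le) (le_refl r))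
    exact_mod_cast h
  have hE4 : sp * t'' + bp = wl + sa + m * r + c * t'' := by
    have h := (hNPp t'' ⟨ht''1.le, by
        have : u ≤ r + ε := min_le_right t₁ (r + ε)
        linarith⟩).unique
      (hleast_right t'' (hboundC t'' (by
        have : u ≤ t₁ := min_le_left t₁ (r + ε)
        linarith)) ht''1.le)
    exact_mod_cast h
  have hsp : sp = (c : ℝ) := by
    have hz : (sp - (c : ℝ)) * (r - t'') = 0 := by
      linear_combination hE3 - hE4
    rcases mul_eq_zero.mp hz with h | h
    · linarith
    · exact absurd (sub_eq_zero.mp h) (ne_of_lt ht''1)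
  rw [hsm, hsp]
  ring
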